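/- Let U be a finite set partitioned into pairwise disjoint subsets U₁, …, Uₙ with U = U₁ ∪ ⋯ ∪ Uₙ, and let 𝒰 be a finite family of subsets of U partitioned into pairwise disjoint subfamilies 𝒰₁, …, 𝒰ₙ with 𝒰 = 𝒰₁ ∪ ⋯ ∪ 𝒰ₙ, such that every A ∈ 𝒰ᵢ satisfies A ⊆ Uᵢ. Then a subfamily S ⊆ 𝒰 is an exact cover of U by 𝒰 if and only if, for every i with 1 ≤ i ≤ n, the subfamily S ∩ 𝒰ᵢ is an exact cover of Uᵢ by 𝒰ᵢ. -/
import Mathlib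


/-- `S` is an exact cover of `U` by the family `𝒰`: `S ⊆ 𝒰`, the members of `S` are
pairwise disjoint, and their union is `U`. -/
def IsExactCover {α : Type*} [DecidableEq α] (U : Finset α) (𝒰 : Finset (Finset α))
    (S : Finset (Finset α)) : Prop :=
  S ⊆ 𝒰 ∧ (S : Set (Finset α)).Pairwise Disjoint ∧ S.sup id = U

theorem isExactCover_iff_forall_component
    {α : Type*} [DecidableEq α] (n : ℕ)
    (U : Finset α) (𝒰 : Finset (Finset α))
    (Upart : Fin n → Finset α) (Fpart : Fin n → Finset (Finset α))
    (hUdisj : ∀ i j, i ≠ j → Disjoint (Upart i) (Upart j))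
    (hU : U = Finset.univ.sup Upart)
    (hFdisj : ∀ i j, i ≠ j → Disjoint (Fpart i) (Fpart j))
    (hF : 𝒰 = Finset.univ.sup Fpart)
    (hsub : ∀ i, ∀ A ∈ Fpart i, A ⊆ Upart i)
    (S : Finset (Finset α)) (hS : S ⊆ 𝒰) :
    IsExactCover U 𝒰 S ↔ ∀ i, IsExactCover (Upart i) (Fpart i) (S ∩ Fpart i) := by
  have hmem : ∀ A ∈ S, ∃ i, A ∈ Fpart i := by
    intro A hA
    have := hS hA
    rw [hF, Finset.mem_sup] at this
    obtain ⟨i, _, hi⟩ := this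
    exact ⟨i, hi⟩
  constructor
  · rintro ⟨_, hdisj, hsup⟩ i
    refine ⟨Finset.inter_subset_right, ?_, ?_⟩
    · intro A hA B hB hAB
      exact hdisj (Finset.mem_of_mem_inter_left hA) (Finset.mem_of_mem_inter_left hB) hAB
    · apply le_antisymm
      · exact Finset.sup_le fun A hA =>
          hsub i A (Finset.mem_of_mem_inter_right hA)
      · intro x hx
        have hxU : x ∈ U := by
          rw [hU, Finset.mem_sup]; exact ⟨i, Finset.mem_univ i, hx⟩
        rw [← hsup, Finset.mem_sup] at hxU
        obtain ⟨A, hAS, hxA⟩ := hxU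
        obtain ⟨j, hj⟩ := hmem A hAS
        have hij : i = j := by
          by_contra h
          exact (hUdisj i j h).le_bot (Finset.mem_inter.mpr ⟨hx, hsub j A hj hxA⟩) |> Finset.notMem_empty x
        rw [Finset.mem_sup]
        exact ⟨A, Finset.mem_inter.mpr ⟨hAS, hij ▸ hj⟩, hxA⟩
  · intro h
    refine ⟨hS, ?_, ?_⟩
    · intro A hA B hB hAB
      obtain ⟨i, hi⟩ := hmem A hA
      obtain ⟨j, hj⟩ := hmem B hB
      by_cases hij : i = j
      · subst hij
        exact (h i).2.1 (Finset.mem_inter.mpr ⟨hA, hi⟩)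
          (Finset.mem_inter.mpr ⟨hB, hj⟩) hAB
      · exact Finset.disjoint_left.mpr fun x hxA hxB =>
          (hUdisj i j hij).le_bot (Finset.mem_inter.mpr ⟨hsub i A hi hxA, hsub j B hj hxB⟩) |> Finset.notMem_empty x
    · apply le_antisymm
      · refine Finset.sup_le fun A hA => ?_
        obtain ⟨i, hi⟩ := hmem A hA
        refine (hsub i A hi).trans ?_
        rw [hU]; exact Finset.le_sup (f := Upart) (Finset.mem_univ i)
      · intro x hx
        rw [hU, Finset.mem_sup] at hx
        obtain ⟨i, _, hxi⟩ := hx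
        have := (h i).2.2
        rw [← this, Finset.mem_sup] at hxi
        obtain ⟨A, hA, hxA⟩ := hxi
        rw [Finset.mem_sup]
        exact ⟨A, Finset.mem_of_mem_inter_left hA, hxA⟩
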